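/- Let n ∈ ℕ and let w ∈ ℝ^n_{≥0} be a non-increasing weight vector whose distinct values are w̄_1 > w̄_2 > … > w̄_N; set w̄_{N+1} = 0, and for r = 1,…,N let I_r be the largest index s with w_s = w̄_r (and I_0 = 0). Let v ∈ ℝ^n_{≥0} be non-increasing and set T_r = v_{I_r} for r = 1,…,N. Then w · v ≥ Σ_{r=1}^{N} (w̄_r − w̄_{r+1}) · I_r · T_r. -/

import Mathlib

/-- Transport a sum over `Finset.Ici r0` in `Fin N` to a sum over `Finset.Ico r0.val N` in `ℕ`. -/
lemma stmt8_aux_bij (N : ℕ) (r0 : Fin N) (f : Fin N → ℝ) (g : ℕ → ℝ)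
    (hfg : ∀ r : Fin N, f r = g r.val) :
    ∑ r ∈ Finset.Ici r0, f r = ∑ j ∈ Finset.Ico (r0 : ℕ) N, g j := by
  refine Finset.sum_bij' (i := fun (r : Fin N) (_ : r ∈ Finset.Ici r0) => (r : ℕ))
    (j := fun (j : ℕ) (hj : j ∈ Finset.Ico (r0 : ℕ) N) =>
      (⟨j, (Finset.mem_Ico.mp hj).2⟩ : Fin N)) ?_ ?_ ?_ ?_ ?_
  · intro a ha
    exact Finset.mem_Ico.mpr ⟨Fin.le_def.mp (Finset.mem_Ici.mp ha), a.isLt⟩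
  · intro a ha
    exact Finset.mem_Ici.mpr (Fin.le_def.mpr (Finset.mem_Ico.mp ha).1)
  · intro a ha; simp
  · intro a ha; simp
  · intro a ha; exact hfg a

/-- Telescoping sum over an `Ico` interval of naturals. -/
lemma stmt8_aux_tel (g : ℕ → ℝ) (a b : ℕ) (h : a ≤ b) :
    ∑ j ∈ Finset.Ico a b, (g j - g (j + 1)) = g a - g b := by
  rw [Finset.sum_Ico_eq_sub _ h, Finset.sum_range_sub' g, Finset.sum_range_sub' g]
  ring

/-- Lower bound on the ordered service cost in terms of the guessed thresholds:
with `w` non-increasing and nonnegative with distinct values `w̄_0 > … > w̄_{N-1}`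
(extended by `w̄_N = 0`), `I r` the largest index attaining value `w̄_r`, `v`
non-increasing and nonnegative, and thresholds `T_r = v (I r)`, one has
`w · v ≥ Σ_r (w̄_r − w̄_{r+1}) · I_r · T_r` (here `I_r` is the one-based count,
i.e. `(I r) + 1`). -/
theorem stmt8 (n N : ℕ) (w : Fin n → ℝ)
    (hw0 : ∀ s, 0 ≤ w s) (hwmono : Antitone w)
    (wbar : Fin (N + 1) → ℝ) (hbar : StrictAnti wbar) (hlast : wbar (Fin.last N) = 0)
    (hvals : ∀ s : Fin n, ∃ r : Fin N, w s = wbar r.castSucc)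
    (hvals' : ∀ r : Fin N, ∃ s : Fin n, w s = wbar r.castSucc)
    (I : Fin N → Fin n)
    (hI : ∀ r : Fin N, w (I r) = wbar r.castSucc ∧
      ∀ s : Fin n, w s = wbar r.castSucc → s ≤ I r)
    (v : Fin n → ℝ) (hv0 : ∀ s, 0 ≤ v s) (hvmono : Antitone v) :
    ∑ r : Fin N, (wbar r.castSucc - wbar r.succ) * ((((I r : ℕ) : ℝ) + 1) * v (I r)) ≤
      ∑ s, w s * v s := by
  set c : Fin N → ℝ := fun r => wbar r.castSucc - wbar r.succ with hc_def
  have hc : ∀ r : Fin N, 0 ≤ c r := by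
    intro r
    exact sub_nonneg.mpr (hbar.antitone (Fin.castSucc_le_succ r))
  -- Step 1: replace `(I r + 1) * v (I r)` by `∑_{s ≤ I r} v s`.
  have step1 : ∀ r : Fin N,
      (((I r : ℕ) : ℝ) + 1) * v (I r) ≤ ∑ s ∈ Finset.Iic (I r), v s := by
    intro r
    have hcard : (Finset.Iic (I r)).card = (I r : ℕ) + 1 := Fin.card_Iic _
    calc (((I r : ℕ) : ℝ) + 1) * v (I r) = ∑ _s ∈ Finset.Iic (I r), v (I r) := by
          rw [Finset.sum_const, hcard]; push_cast; ring
      _ ≤ ∑ s ∈ Finset.Iic (I r), v s :=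
          Finset.sum_le_sum fun s hs => hvmono (Finset.mem_Iic.mp hs)
  -- Characterization of `s ≤ I r`.
  have hchar : ∀ (s : Fin n) (r0 : Fin N), w s = wbar r0.castSucc →
      ∀ r : Fin N, s ≤ I r ↔ r0 ≤ r := by
    intro s r0 hr0 r
    constructor
    · intro h
      have h1 : wbar r.castSucc ≤ wbar r0.castSucc := by
        rw [← hr0, ← (hI r).1]; exact hwmono h
      have := (hbar.le_iff_ge).mp h1
      exact (Fin.castSucc_le_castSucc_iff).mp this
    · intro h
      by_contra hs
      push_neg at hs
      have h1 : w s ≤ wbar r.castSucc := by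
        rw [← (hI r).1]; exact hwmono hs.le
      have h2 : wbar r.castSucc ≤ w s := by
        rw [hr0]; exact hbar.antitone (Fin.castSucc_le_castSucc_iff.mpr h)
      exact absurd ((hI r).2 s (le_antisymm h1 h2)) (not_le.mpr hs)
  -- Telescoping sum.
  have htel : ∀ r0 : Fin N, ∑ r ∈ Finset.Ici r0, c r = wbar r0.castSucc := by
    intro r0
    set g : ℕ → ℝ := fun j => if h : j < N + 1 then wbar ⟨j, h⟩ else 0 with hg_def
    have hfg : ∀ r : Fin N, c r = g r.val - g (r.val + 1) := by
      intro r
      have h1 : g r.val = wbar r.castSucc := by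
        rw [hg_def]; simp only
        rw [dif_pos (by omega : (r : ℕ) < N + 1)]
        congr 1
      have h2 : g (r.val + 1) = wbar r.succ := by
        rw [hg_def]; simp only
        rw [dif_pos (by omega : (r : ℕ) + 1 < N + 1)]
        congr 1
      rw [h1, h2]
    rw [stmt8_aux_bij N r0 c (fun j => g j - g (j + 1)) hfg,
      stmt8_aux_tel g (r0 : ℕ) N r0.isLt.le]
    have h1 : g (r0 : ℕ) = wbar r0.castSucc := by
      rw [hg_def]; simp only
      rw [dif_pos (by omega : (r0 : ℕ) < N + 1)]
      congr 1
    have h2 : g N = 0 := by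
      rw [hg_def]; simp only
      rw [dif_pos (by omega : N < N + 1)]
      rw [show (⟨N, by omega⟩ : Fin (N + 1)) = Fin.last N from rfl, hlast]
    rw [h1, h2, sub_zero]
  -- Main computation.
  have key : ∑ r : Fin N, c r * ∑ s ∈ Finset.Iic (I r), v s = ∑ s, w s * v s := by
    have hrw : ∀ r : Fin N, c r * ∑ s ∈ Finset.Iic (I r), v s
        = ∑ s : Fin n, if s ≤ I r then c r * v s else 0 := by
      intro r
      rw [Finset.sum_ite, Finset.sum_const_zero, add_zero, ← Finset.mul_sum]
      congr 1
      apply Finset.sum_congr _ (fun _ _ => rfl)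
      ext s; simp
    calc ∑ r : Fin N, c r * ∑ s ∈ Finset.Iic (I r), v s
        = ∑ r : Fin N, ∑ s : Fin n, if s ≤ I r then c r * v s else 0 :=
          Finset.sum_congr rfl fun r _ => hrw r
      _ = ∑ s : Fin n, ∑ r : Fin N, if s ≤ I r then c r * v s else 0 := Finset.sum_comm
      _ = ∑ s, w s * v s := by
          apply Finset.sum_congr rfl
          intro s _
          obtain ⟨r0, hr0⟩ := hvals s
          have : ∀ r : Fin N, (if s ≤ I r then c r * v s else 0)
              = (if r0 ≤ r then c r else 0) * v s := by
            intro r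
            simp only [hchar s r0 hr0 r]
            split <;> simp
          rw [Finset.sum_congr rfl fun r _ => this r, ← Finset.sum_mul,
            Finset.sum_ite, Finset.sum_const_zero, add_zero]
          have hfilter : Finset.filter (fun r => r0 ≤ r) Finset.univ = Finset.Ici r0 := by
            ext r; simp
          rw [hfilter, htel r0, ← hr0]
  calc ∑ r : Fin N, c r * ((((I r : ℕ) : ℝ) + 1) * v (I r))
      ≤ ∑ r : Fin N, c r * ∑ s ∈ Finset.Iic (I r), v s :=
        Finset.sum_le_sum fun r _ => mul_le_mul_of_nonneg_left (step1 r) (hc r)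
    _ = ∑ s, w s * v s := key
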